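/- Let G be a finite simple graph, let I be a maximum independent set of G with |I| ≥ 2, and let J be an independent set of G with |J| = |I|. Let G* be the disjoint union of G with a finite set V* of isolated vertices. Then I and J are reconfigurable in G under (|I| − 1)-TJ if and only if I ∪ V* and J ∪ V* are reconfigurable in G* under (|I| − 1)-TJ. (Note that |I| − 1 = |I ∪ V*| − (|V*| + 1), so this says the (|I| − μ)-TJ problem with μ = 1 in G is equivalent to the (|I*| − μ*)-TJ problem with μ* = |V*| + 1 in G*.) -/

import Mathlib

/-- A set of vertices is independent: no two of its vertices are adjacent. -/
def IndepSet {α : Type*} (G : SimpleGraph α) (S : Finset α) : Prop :=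
  ∀ ⦃u⦄, u ∈ S → ∀ ⦃v⦄, v ∈ S → ¬ G.Adj u v

/-- `I` and `J` are reconfigurable under `k`-TJ: there is a finite sequence of
independent sets, all of cardinality `|I|`, from `I` to `J`, with consecutive sets
having symmetric difference of cardinality at most `2k`. -/
def ReconfTJ {α : Type*} [DecidableEq α] (G : SimpleGraph α) (k : ℕ) (I J : Finset α) : Prop :=
  ∃ (f : ℕ → Finset α) (ℓ : ℕ), f 0 = I ∧ f ℓ = J ∧
    (∀ i ≤ ℓ, IndepSet G (f i) ∧ (f i).card = I.card) ∧
    ∀ i < ℓ, (symmDiff (f i) (f (i + 1))).card ≤ 2 * k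

/-- The disjoint union of `G` with a set `W` of isolated vertices: the graph on
`V ⊕ W` whose edges are exactly the edges of `G`. -/
def addIsolated {α : Type*} (G : SimpleGraph α) (W : Type*) : SimpleGraph (α ⊕ W) where
  Adj a b := ∃ u v, a = Sum.inl u ∧ b = Sum.inl v ∧ G.Adj u v
  symm := by
    constructor
    rintro a b ⟨u, v, rfl, rfl, h⟩
    exact ⟨v, u, rfl, rfl, h.symm⟩
  loopless := by
    constructor
    rintro a ⟨u, v, rfl, h2, h3⟩
    injection h2 with h
    subst h
    exact G.irrefl h3

set_option linter.unusedSectionVars false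
set_option linter.unreachableTactic false
set_option linter.unusedTactic false

section Aux

open Finset

variable {V W : Type*} [Fintype V] [Fintype W] [DecidableEq V] [DecidableEq W]
  {G : SimpleGraph V}

/-- The left (≡ `V`) part of a finset of `V ⊕ W`. -/
noncomputable def leftPart (T : Finset (V ⊕ W)) : Finset V :=
  T.preimage Sum.inl Sum.inl_injective.injOn

/-- Full sets: those of the form `A.image inl ∪ univ.image inr`. -/
noncomputable def fullSet (A : Finset V) : Finset (V ⊕ W) :=
  A.image Sum.inl ∪ (Finset.univ : Finset W).image Sum.inr

lemma leftPart_fullSet (A : Finset V) : leftPart (fullSet (W := W) A) = A := by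
  ext v; simp [leftPart, fullSet]

lemma card_fullSet (A : Finset V) : (fullSet (W := W) A).card = A.card + Fintype.card W := by
  rw [fullSet, Finset.card_union_of_disjoint, Finset.card_image_of_injective _ Sum.inl_injective,
    Finset.card_image_of_injective _ Sum.inr_injective, Finset.card_univ]
  simp [Finset.disjoint_left]

lemma indep_fullSet {A : Finset V} (hA : IndepSet G A) :
    IndepSet (addIsolated G W) (fullSet A) := by
  rintro a ha b hb ⟨u, v, rfl, rfl, h⟩
  simp only [fullSet, Finset.mem_union, Finset.mem_image] at ha hb
  have hu : u ∈ A := by rcases ha with ⟨u', hu', h'⟩ | ⟨w, _, h'⟩ <;> simp_all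
  have hv : v ∈ A := by rcases hb with ⟨v', hv', h'⟩ | ⟨w, _, h'⟩ <;> simp_all
  exact hA hu hv h

lemma card_symmDiff_fullSet (A B : Finset V) :
    (symmDiff (fullSet (W := W) A) (fullSet B)).card = (symmDiff A B).card := by
  have : symmDiff (fullSet (W := W) A) (fullSet B) = (symmDiff A B).image Sum.inl := by
    ext x
    cases x <;> simp [Finset.mem_symmDiff, fullSet] <;> tauto
  rw [this, Finset.card_image_of_injective _ Sum.inl_injective]

lemma indep_leftPart {T : Finset (V ⊕ W)} (hT : IndepSet (addIsolated G W) T) :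
    IndepSet G (leftPart T) := by
  intro u hu v hv h
  simp only [leftPart, Finset.mem_preimage] at hu hv
  exact hT hu hv ⟨u, v, rfl, rfl, h⟩

lemma struct {I : Finset V} (hmax : ∀ I' : Finset V, IndepSet G I' → I'.card ≤ I.card)
    {T : Finset (V ⊕ W)} (hT : IndepSet (addIsolated G W) T)
    (hcard : T.card = I.card + Fintype.card W) :
    T = fullSet (leftPart T) ∧ (leftPart T).card = I.card := by
  set A := leftPart T with hA
  set B := T.preimage Sum.inr Sum.inr_injective.injOn with hB
  have hdecomp : T = A.image Sum.inl ∪ B.image Sum.inr := by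
    ext x; cases x <;> simp [hA, hB, leftPart]
  have hcards : T.card = A.card + B.card := by
    rw [hdecomp, Finset.card_union_of_disjoint, Finset.card_image_of_injective _ Sum.inl_injective,
      Finset.card_image_of_injective _ Sum.inr_injective]
    simp [Finset.disjoint_left]
  have hAle : A.card ≤ I.card := hmax A (indep_leftPart hT)
  have hBle : B.card ≤ Fintype.card W := by
    simpa using Finset.card_le_univ B
  have hAeq : A.card = I.card := by omega
  have hBeq : B.card = Fintype.card W := by omega
  have hBuniv : B = Finset.univ := Finset.eq_univ_of_card _ hBeq
  refine ⟨?_, hAeq⟩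
  rw [fullSet, ← hBuniv, hdecomp]

end Aux

theorem stmt14 {V W : Type*} [Fintype V] [Fintype W] [DecidableEq V] [DecidableEq W]
    (G : SimpleGraph V) (I : Finset V) (hI : IndepSet G I)
    (hmax : ∀ I' : Finset V, IndepSet G I' → I'.card ≤ I.card) (hI2 : 2 ≤ I.card)
    (J : Finset V) (hJ : IndepSet G J) (hIJ : J.card = I.card) :
    ReconfTJ G (I.card - 1) I J ↔
      ReconfTJ (addIsolated G W) (I.card - 1)
        (I.image Sum.inl ∪ (Finset.univ : Finset W).image Sum.inr)
        (J.image Sum.inl ∪ (Finset.univ : Finset W).image Sum.inr) := by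
  have hIstar : (fullSet (W := W) I).card = I.card + Fintype.card W := card_fullSet I
  constructor
  · rintro ⟨f, ℓ, h0, hℓ, hind, hstep⟩
    refine ⟨fun i => fullSet (f i), ℓ, by show fullSet (f 0) = _; rw [h0]; rfl,
      by show fullSet (f ℓ) = _; rw [hℓ]; rfl, ?_, ?_⟩
    · intro i hi
      obtain ⟨h1, h2⟩ := hind i hi
      refine ⟨indep_fullSet h1, ?_⟩
      rw [card_fullSet, h2, ← hIstar]
      rfl
    · intro i hi
      rw [card_symmDiff_fullSet]
      exact hstep i hi
  · rintro ⟨g, ℓ, h0, hℓ, hind, hstep⟩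
    have key : ∀ i ≤ ℓ, g i = fullSet (leftPart (g i)) ∧ (leftPart (g i)).card = I.card := by
      intro i hi
      obtain ⟨h1, h2⟩ := hind i hi
      exact struct hmax h1 (by rw [h2, ← hIstar]; rfl)
    refine ⟨fun i => leftPart (g i), ℓ, ?_, ?_, ?_, ?_⟩
    · show leftPart (g 0) = I
      rw [h0]; exact leftPart_fullSet I
    · show leftPart (g ℓ) = J
      rw [hℓ]; exact leftPart_fullSet J
    · intro i hi
      exact ⟨indep_leftPart (hind i hi).1, (key i hi).2⟩
    · intro i hi
      have h1 := (key i hi.le).1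
      have h2 := (key (i + 1) hi).1
      have := hstep i hi
      rwa [h1, h2, card_symmDiff_fullSet] at this
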